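/- arXiv:1405.4052 — 5 statements merged into one kernel-verified Lean document; each statement's English description precedes it below -/
import Mathlib

section
/- Let {s_j} and {d_j} be two finite indexed families of vectors in a finite-dimensional complex inner product space. There exists a Hermitian (self-adjoint) linear operator Q satisfying Q s_j = d_j for all j if and only if (i) ⟨s_j, d_k⟩ = ⟨d_j, s_k⟩ for all j, k, and (ii) every linear relation among the s_j is also a linear relation among the d_j, i.e., for all complex coefficients α_j, ∑_j α_j s_j = 0 implies ∑_j α_j d_j = 0. -/
open scoped InnerProductSpace

/-- Hermitian interpolation lemma: existence of a self-adjoint operator `Q` with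
`Q (s j) = d j` for all `j` iff the Gram-type symmetry condition holds and every
linear relation among the `s j` is also a linear relation among the `d j`. -/
theorem hermitian_interpolation
    {E : Type*} [NormedAddCommGroup E] [InnerProductSpace ℂ E]
    [FiniteDimensional ℂ E] {ι : Type*} [Fintype ι] (s d : ι → E) :
    (∃ Q : E →ₗ[ℂ] E, Q.IsSymmetric ∧ ∀ j, Q (s j) = d j) ↔
      ((∀ j k, ⟪s j, d k⟫_ℂ = ⟪d j, s k⟫_ℂ) ∧
        ∀ α : ι → ℂ, ∑ j, α j • s j = 0 → ∑ j, α j • d j = 0) := by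
  constructor
  · rintro ⟨Q, hQ, hQs⟩
    refine ⟨fun j k => ?_, fun α hα => ?_⟩
    · rw [← hQs k, ← hQs j, hQ (s j) (s k)]
    · have : Q (∑ j, α j • s j) = ∑ j, α j • d j := by
        rw [map_sum]; simp [hQs]
      rw [hα, map_zero] at this
      exact this.symm
  · rintro ⟨hsym, hrel⟩
    classical
    -- the linear maps α ↦ ∑ α j • s j and α ↦ ∑ α j • d j
    set φ : (ι → ℂ) →ₗ[ℂ] E := Fintype.linearCombination ℂ s with hφdef
    set ψ : (ι → ℂ) →ₗ[ℂ] E := Fintype.linearCombination ℂ d with hψdef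
    have hφ : ∀ α : ι → ℂ, φ α = ∑ j, α j • s j := fun α => rfl
    have hψ : ∀ α : ι → ℂ, ψ α = ∑ j, α j • d j := fun α => rfl
    have hker : LinearMap.ker φ ≤ LinearMap.ker ψ := by
      intro α hα
      rw [LinearMap.mem_ker] at hα ⊢
      rw [hψ]
      exact hrel α (by rw [← hφ]; exact hα)
    -- factor ψ through φ : there is g with g ∘ φ = ψ
    obtain ⟨g, hg⟩ : ∃ g : E →ₗ[ℂ] E, g ∘ₗ φ = ψ := by
      set K := LinearMap.ker φ
      set φ' : (ι → ℂ) ⧸ K →ₗ[ℂ] E := K.liftQ φ le_rfl with hφ'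
      have hφ'inj : LinearMap.ker φ' = ⊥ := Submodule.ker_liftQ_eq_bot _ _ _ le_rfl
      obtain ⟨ℓ, hℓ⟩ := φ'.exists_leftInverse_of_injective hφ'inj
      refine ⟨K.liftQ ψ hker ∘ₗ ℓ, ?_⟩
      apply LinearMap.ext; intro α
      have h1 : ℓ (φ α) = K.mkQ α := by
        have : φ α = φ' (K.mkQ α) := rfl
        rw [this, ← LinearMap.comp_apply, hℓ, LinearMap.id_apply]
      simp only [LinearMap.comp_apply, h1]
      rfl
    have hgφ : ∀ α, g (φ α) = ψ α := fun α => by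
      rw [← LinearMap.comp_apply, hg]
    have hgs : ∀ j, g (s j) = d j := by
      intro j
      have h1 : φ (Pi.single j 1) = s j := by
        rw [hφ]
        simp [Pi.single_apply]
      have h2 : ψ (Pi.single j 1) = d j := by
        rw [hψ]
        simp [Pi.single_apply]
      rw [← h1, hgφ, h2]
    -- the span of the s j
    set V : Submodule ℂ E := Submodule.span ℂ (Set.range s) with hV
    have hsV : ∀ j, s j ∈ V := fun j => Submodule.subset_span ⟨j, rfl⟩
    -- g is "symmetric" on V
    have hgsym : ∀ v ∈ V, ∀ w ∈ V, ⟪g v, w⟫_ℂ = ⟪v, g w⟫_ℂ := by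
      intro v hv w hw
      induction hv, hw using Submodule.span_induction₂ with
      | mem_mem x y hx hy =>
        obtain ⟨j, rfl⟩ := hx
        obtain ⟨k, rfl⟩ := hy
        rw [hgs j, hgs k]
        exact (hsym j k).symm
      | zero_left y hy => simp
      | zero_right x hx => simp
      | add_left x y z hx hy hz h1 h2 => simp [inner_add_left, h1, h2]
      | add_right x y z hx hy hz h1 h2 => simp [inner_add_right, h1, h2]
      | smul_left r x y hx hy h => simp [inner_smul_left, h]
      | smul_right r x y hx hy h => simp [inner_smul_right, h]
    -- the orthogonal projection onto V, as a linear map E →ₗ E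
    set P : E →ₗ[ℂ] E := ((V.subtypeL ∘L V.orthogonalProjectionOnto : E →L[ℂ] E) : E →ₗ[ℂ] E) with hP
    have hPmem : ∀ x, P x ∈ V := fun x => (V.orthogonalProjectionOnto x).2
    have hPself : ∀ v ∈ V, P v = v := fun v hv => Submodule.starProjection_eq_self_iff.mpr hv
    have hPsym : ∀ x y, ⟪P x, y⟫_ℂ = ⟪x, P y⟫_ℂ := fun x y =>
      Submodule.inner_starProjection_left_eq_right V x y
    set A : E →ₗ[ℂ] E := g ∘ₗ P with hA
    refine ⟨A + (LinearMap.adjoint A) ∘ₗ (LinearMap.id - P), ?_, ?_⟩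
    · intro x y
      simp only [LinearMap.add_apply, LinearMap.comp_apply, LinearMap.sub_apply,
        LinearMap.id_apply, inner_add_left, inner_add_right,
        LinearMap.adjoint_inner_left, LinearMap.adjoint_inner_right]
      have hAx : A x = g (P x) := rfl
      have hAy : A y = g (P y) := rfl
      rw [hAx, hAy]
      have key : ⟪g (P x), P y⟫_ℂ = ⟪P x, g (P y)⟫_ℂ :=
        hgsym _ (hPmem x) _ (hPmem y)
      have h1 : ⟪x - P x, g (P y)⟫_ℂ = ⟪x, g (P y)⟫_ℂ - ⟪P x, g (P y)⟫_ℂ := by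
        rw [inner_sub_left]
      have h2 : ⟪g (P x), y - P y⟫_ℂ = ⟪g (P x), y⟫_ℂ - ⟪g (P x), P y⟫_ℂ := by
        rw [inner_sub_right]
      rw [h1, h2, key]
      ring
    · intro j
      simp only [LinearMap.add_apply, LinearMap.comp_apply, LinearMap.sub_apply,
        LinearMap.id_apply]
      rw [hPself (s j) (hsV j)]
      have : A (s j) = g (P (s j)) := rfl
      rw [this, hPself (s j) (hsV j), hgs j]
      simp
end

section
/- Let {s_j} be a finite linearly independent family of vectors in a finite-dimensional complex inner product space, and {d_j} a family of the same index set such that the Gram-type matrix g_{jk} = ⟨s_j, d_k⟩ is Hermitian (g_{jk} = conj(g_{kj})). Then there exists a self-adjoint operator Q with Q s_j = d_j for all j. -/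
open scoped InnerProductSpace

/-- Sufficiency for linearly independent `s`: if the Gram-type matrix
`g j k = ⟪s j, d k⟫` is Hermitian then a self-adjoint interpolating operator exists. -/
theorem hermitian_interpolation_of_linearIndependent
    {E : Type*} [NormedAddCommGroup E] [InnerProductSpace ℂ E]
    [FiniteDimensional ℂ E] {ι : Type*} [Fintype ι] (s d : ι → E)
    (hs : LinearIndependent ℂ s)
    (hg : ∀ j k, ⟪s j, d k⟫_ℂ = starRingEnd ℂ ⟪s k, d j⟫_ℂ) :
    ∃ Q : E →ₗ[ℂ] E, Q.IsSymmetric ∧ ∀ j, Q (s j) = d j := by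
  classical
  set S : Submodule ℂ E := Submodule.span ℂ (Set.range s) with hS
  let b : Module.Basis ι ℂ S := Module.Basis.span hs
  have hb : ∀ j, (b j : E) = s j := fun j => congrArg Subtype.val (Module.Basis.span_apply hs j)
  let L : S →ₗ[ℂ] E := b.constr ℂ d
  have hLb : ∀ j, L (b j) = d j := fun j => b.constr_basis ℂ d j
  let P : E →ₗ[ℂ] S := (S.orthogonalProjectionOnto : E →L[ℂ] S).toLinearMap
  let T : E →ₗ[ℂ] E := L ∘ₗ P
  let Pe : E →ₗ[ℂ] E := S.subtype ∘ₗ P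
  -- key: ⟪(u:E), L v⟫ = ⟪L u, (v:E)⟫
  have hkey : ∀ u v : S, ⟪(u : E), L v⟫_ℂ = ⟪L u, (v : E)⟫_ℂ := by
    intro u v
    have hu : (u : E) = ∑ j, b.repr u j • s j := by
      conv_lhs => rw [← b.sum_repr u]
      push_cast
      simp [hb]
    have hv : (v : E) = ∑ j, b.repr v j • s j := by
      conv_lhs => rw [← b.sum_repr v]
      push_cast
      simp [hb]
    have hLu : L u = ∑ j, b.repr u j • d j := by
      conv_lhs => rw [← b.sum_repr u]
      simp [hLb, -Module.Basis.sum_repr]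
    have hLv : L v = ∑ j, b.repr v j • d j := by
      conv_lhs => rw [← b.sum_repr v]
      simp [hLb, -Module.Basis.sum_repr]
    rw [hu, hv, hLu, hLv]
    rw [sum_inner, sum_inner]
    refine Finset.sum_congr rfl fun j _ => ?_
    rw [inner_sum, inner_sum]
    refine Finset.sum_congr rfl fun k _ => ?_
    rw [inner_smul_left, inner_smul_left, inner_smul_right, inner_smul_right]
    have : ⟪s j, d k⟫_ℂ = ⟪d j, s k⟫_ℂ := by
      rw [hg j k, inner_conj_symm]
    rw [this]
  have hPes : ∀ j, Pe (s j) = s j := by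
    intro j
    have : s j ∈ S := Submodule.subset_span ⟨j, rfl⟩
    simpa [Pe, P, Submodule.coe_orthogonalProjectionOnto_apply] using Submodule.starProjection_eq_self_iff.2 this
  have hTs : ∀ j, T (s j) = d j := by
    intro j
    have hmem : s j ∈ S := Submodule.subset_span ⟨j, rfl⟩
    have hP : P (s j) = b j := by
      apply Subtype.ext
      rw [hb]
      simpa [P, Submodule.coe_orthogonalProjectionOnto_apply] using Submodule.starProjection_eq_self_iff.2 hmem
    simp [T, hP, hLb]
  refine ⟨T + LinearMap.adjoint T - (LinearMap.adjoint T) ∘ₗ Pe, ?_, ?_⟩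
  · intro x y
    simp only [LinearMap.sub_apply, LinearMap.add_apply, LinearMap.comp_apply,
      inner_sub_left, inner_add_left, inner_sub_right, inner_add_right,
      LinearMap.adjoint_inner_left, LinearMap.adjoint_inner_right]
    have h1 : ⟪Pe x, T y⟫_ℂ = ⟪T x, Pe y⟫_ℂ := by
      simpa [T, Pe, LinearMap.comp_apply] using hkey (P x) (P y)
    rw [h1]
    ring
  · intro j
    simp only [LinearMap.sub_apply, LinearMap.add_apply, LinearMap.comp_apply, hPes, hTs]
    abel
end

section
/- With the notation above, for any self-adjoint operator Q on the output space: ∑_j ‖(Q E_j − E_j L_θ)√ρ_θ‖²_HS = F(ρ_θ) − F(𝒩(ρ_θ)) + Tr[(Q − 𝓛_θ)² 𝒩(ρ_θ)], where F(σ_θ) = Tr(σ_θ 𝓛²) for the SLD 𝓛 of σ_θ and ‖A‖_HS = √Tr(A†A). -/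
open Matrix
open scoped ComplexOrder
/-- The positive semidefinite square root of a positive semidefinite matrix
(as defined in Mathlib of December 2024, since removed). -/
noncomputable def Matrix.PosSemidef.sqrt {m : Type*} [Fintype m] [DecidableEq m]
    {𝕜 : Type*} [RCLike 𝕜] {A : Matrix m m 𝕜} (hA : A.PosSemidef) : Matrix m m 𝕜 :=
  hA.1.eigenvectorUnitary.1 * diagonal ((↑) ∘ (√·) ∘ hA.1.eigenvalues) *
  (star hA.1.eigenvectorUnitary : Matrix m m 𝕜)

theorem psd_sqrt_conjTranspose_aux {n : ℕ} (ρ : Matrix (Fin n) (Fin n) ℂ) (hρ : ρ.PosSemidef) : (hρ.sqrt)ᴴ = hρ.sqrt := by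
  simp only [Matrix.PosSemidef.sqrt, Matrix.conjTranspose_mul, Matrix.diagonal_conjTranspose,
    Matrix.star_eq_conjTranspose, Matrix.conjTranspose_conjTranspose, Matrix.mul_assoc]
  congr 3
  funext i; simp

theorem psd_sqrt_mul_self_aux {n : ℕ} (ρ : Matrix (Fin n) (Fin n) ℂ) (hρ : ρ.PosSemidef) : hρ.sqrt * hρ.sqrt = ρ := by
  conv_rhs => rw [hρ.1.spectral_theorem]
  simp only [Matrix.PosSemidef.sqrt, Unitary.conjStarAlgAut_apply]
  have hU : (star hρ.1.eigenvectorUnitary : Matrix (Fin n) (Fin n) ℂ) * hρ.1.eigenvectorUnitary.1 = 1 :=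
    Unitary.coe_star_mul_self _
  rw [show ∀ a b c d e f : Matrix (Fin n) (Fin n) ℂ, a * b * c * (d * e * f) = a * b * (c * d) * e * f
    from fun a b c d e f => by simp only [Matrix.mul_assoc], hU, Matrix.mul_one, Matrix.mul_assoc _ (diagonal _) (diagonal _),
    diagonal_mul_diagonal]
  congr 3
  funext i
  simp only [Function.comp_apply]
  rw [← RCLike.ofReal_mul, Real.mul_self_sqrt (hρ.eigenvalues_nonneg i)]

/-- Ozawa-type identity: for any self-adjoint `Q` on the output space,
`∑_j ‖(Q E_j − E_j L)√ρ‖²_HS = F(ρ) − F(𝒩(ρ)) + Tr[(Q − 𝓛)² 𝒩(ρ)]`. -/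
theorem qfi_loss_identity
    {n : ℕ} {ι : Type*} [Fintype ι]
    (ρ L 𝓛 Q : Matrix (Fin n) (Fin n) ℂ) (hρ : ρ.PosSemidef)
    (hρtr : ρ.trace = 1) (hL : L.IsHermitian) (h𝓛 : 𝓛.IsHermitian)
    (hQ : Q.IsHermitian)
    (E : ι → Matrix (Fin n) (Fin n) ℂ)
    (hKraus : ∑ j, (E j)ᴴ * E j = 1)
    (hSLDout : ∑ j, E j * (L * ρ + ρ * L) * (E j)ᴴ
      = 𝓛 * (∑ j, E j * ρ * (E j)ᴴ) + (∑ j, E j * ρ * (E j)ᴴ) * 𝓛) :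
    ∑ j, (((Q * E j - E j * L) * hρ.sqrt)ᴴ * ((Q * E j - E j * L) * hρ.sqrt)).trace
      = (ρ * L ^ 2).trace - ((∑ j, E j * ρ * (E j)ᴴ) * 𝓛 ^ 2).trace
        + ((Q - 𝓛) ^ 2 * (∑ j, E j * ρ * (E j)ᴴ)).trace := by
  classical
  have hsH : (hρ.sqrt)ᴴ = hρ.sqrt := psd_sqrt_conjTranspose_aux ρ hρ
  have hs : hρ.sqrt * hρ.sqrt = ρ := psd_sqrt_mul_self_aux ρ hρ
  set σ : Matrix (Fin n) (Fin n) ℂ := ∑ j, E j * ρ * (E j)ᴴ with hσ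
  -- Step 1: each summand is Tr(Aᴴ A ρ)
  have e1 : ∀ (A : Matrix (Fin n) (Fin n) ℂ),
      ((A * hρ.sqrt)ᴴ * (A * hρ.sqrt)).trace = (Aᴴ * (A * ρ)).trace := by
    intro A
    rw [Matrix.conjTranspose_mul, hsH, Matrix.trace_mul_comm]
    have : (A * hρ.sqrt) * (hρ.sqrt * Aᴴ) = (A * ρ) * Aᴴ := by
      rw [Matrix.mul_assoc A, ← Matrix.mul_assoc hρ.sqrt, hs, ← Matrix.mul_assoc]
    rw [this, Matrix.trace_mul_comm]
  -- Step 2: expand each summand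
  have key : ∀ j : ι, (((Q * E j - E j * L) * hρ.sqrt)ᴴ * ((Q * E j - E j * L) * hρ.sqrt)).trace
      = (Q * Q * (E j * ρ * (E j)ᴴ)).trace
        - (Q * (E j * (L * ρ + ρ * L) * (E j)ᴴ)).trace
        + ((E j)ᴴ * E j * (L * ρ * L)).trace := by
    intro j
    rw [e1]
    have hA : (Q * E j - E j * L)ᴴ = (E j)ᴴ * Q - L * (E j)ᴴ := by
      rw [Matrix.conjTranspose_sub, Matrix.conjTranspose_mul, Matrix.conjTranspose_mul,
        hQ.eq, hL.eq]
    rw [hA]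
    have expand : ((E j)ᴴ * Q - L * (E j)ᴴ) * ((Q * E j - E j * L) * ρ)
        = (E j)ᴴ * (Q * Q * (E j * ρ))
          - ((E j)ᴴ * (Q * (E j * (L * ρ))) + (L * (E j)ᴴ) * (Q * (E j * ρ)))
          + L * ((E j)ᴴ * (E j * (L * ρ))) := by
      simp only [Matrix.sub_mul, Matrix.mul_sub, Matrix.mul_assoc]
      abel
    rw [expand]
    simp only [Matrix.trace_sub, Matrix.trace_add]
    have t1 : ((E j)ᴴ * (Q * Q * (E j * ρ))).trace = (Q * Q * (E j * ρ * (E j)ᴴ)).trace := by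
      rw [Matrix.trace_mul_comm]; simp only [Matrix.mul_assoc]
    have t2 : ((E j)ᴴ * (Q * (E j * (L * ρ)))).trace = (Q * (E j * (L * ρ) * (E j)ᴴ)).trace := by
      rw [Matrix.trace_mul_comm]; simp only [Matrix.mul_assoc]
    have t3 : ((L * (E j)ᴴ) * (Q * (E j * ρ))).trace = (Q * (E j * (ρ * L) * (E j)ᴴ)).trace := by
      rw [Matrix.trace_mul_comm]; simp only [Matrix.mul_assoc]
    have t4 : (L * ((E j)ᴴ * (E j * (L * ρ)))).trace = ((E j)ᴴ * E j * (L * ρ * L)).trace := by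
      rw [Matrix.trace_mul_comm]; simp only [Matrix.mul_assoc]
    rw [t1, t2, t3, t4]
    have : Q * (E j * (L * ρ + ρ * L) * (E j)ᴴ)
        = Q * (E j * (L * ρ) * (E j)ᴴ) + Q * (E j * (ρ * L) * (E j)ᴴ) := by
      simp only [Matrix.mul_add, Matrix.add_mul]
    rw [this, Matrix.trace_add]
  rw [Finset.sum_congr rfl (fun j _ => key j)]
  simp only [Finset.sum_add_distrib, Finset.sum_sub_distrib, ← Matrix.trace_sum,
    ← Finset.mul_sum, ← Finset.sum_mul]
  rw [hSLDout, hKraus, one_mul]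
  -- Now pure trace algebra
  have hLρL : (L * ρ * L).trace = (ρ * L ^ 2).trace := by
    rw [Matrix.trace_mul_comm, ← Matrix.mul_assoc, Matrix.trace_mul_comm, ← pow_two]
  have hQ𝓛 : (Q * (𝓛 * σ + σ * 𝓛)).trace
      = (Q * 𝓛 * σ).trace + (𝓛 * Q * σ).trace := by
    rw [Matrix.mul_add, Matrix.trace_add, ← Matrix.mul_assoc]
    congr 1
    rw [← Matrix.mul_assoc, Matrix.trace_mul_cycle]
  have hsq : ((Q - 𝓛) ^ 2 * σ).trace
      = (Q * Q * σ).trace - (Q * 𝓛 * σ).trace - (𝓛 * Q * σ).trace + (𝓛 * 𝓛 * σ).trace := by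
    have : (Q - 𝓛) ^ 2 * σ = Q * Q * σ - Q * 𝓛 * σ - 𝓛 * Q * σ + 𝓛 * 𝓛 * σ := by
      rw [pow_two]
      simp only [Matrix.sub_mul, Matrix.mul_sub]
      abel
    rw [this, Matrix.trace_add, Matrix.trace_sub, Matrix.trace_sub]
  have h𝓛sq : (σ * 𝓛 ^ 2).trace = (𝓛 * 𝓛 * σ).trace := by
    rw [Matrix.trace_mul_comm, pow_two]
  rw [hLρL, hQ𝓛, hsq, h𝓛sq]
  ring
end

section
/- Direct-sum additivity of quantum Fisher information for a 2-dimensional mixed-state family: for a smooth family of 2×2 density matrices ϱ_ω with det(ϱ_ω) > 0, the quantum Fisher information satisfies F(ϱ_ω) = Tr[(∂_ω ϱ_ω)²] + (1/det ϱ_ω) Tr[(1 − ϱ_ω)(∂_ω ϱ_ω)(1 − ϱ_ω)(∂_ω ϱ_ω)], where F(ϱ_ω) = Tr(ϱ_ω L_ω²) and L_ω is the SLD defined by ∂_ω ϱ_ω = (L_ω ϱ_ω + ϱ_ω L_ω)/2. -/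
open Matrix
open scoped ComplexOrder

/-- Explicit QFI formula for a `2×2` density-matrix family:
`F = Tr[(∂ϱ)²] + (1/det ϱ) Tr[(1 − ϱ)(∂ϱ)(1 − ϱ)(∂ϱ)]`, where `F = Tr(ϱ L²)`
and `L` is the SLD, `∂ϱ = ½(Lϱ + ϱL)`. -/
theorem qfi_two_dim_formula
    (ϱ dϱ L : Matrix (Fin 2) (Fin 2) ℂ)
    (hϱ : ϱ.PosDef) (hϱtr : ϱ.trace = 1)
    (hL : L.IsHermitian)
    (hSLD : dϱ = (1/2 : ℂ) • (L * ϱ + ϱ * L)) :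
    (ϱ * L ^ 2).trace
      = (dϱ * dϱ).trace
        + (1 / ϱ.det) * ((1 - ϱ) * dϱ * (1 - ϱ) * dϱ).trace := by
  have hd : ϱ.det ≠ 0 := ne_of_gt hϱ.det_pos
  have h1 : ϱ 0 0 + ϱ 1 1 = 1 := by
    simpa [Matrix.trace, Fin.sum_univ_two, Matrix.diag] using hϱtr
  have h2 : ϱ 1 1 = 1 - ϱ 0 0 := by linear_combination h1
  subst hSLD
  simp only [Matrix.det_fin_two] at hd ⊢
  simp only [Matrix.trace, Matrix.diag, Matrix.mul_apply, Matrix.sub_apply,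
    Matrix.one_apply, Matrix.smul_apply, Matrix.add_apply, Fin.sum_univ_two,
    pow_two, Fin.isValue, smul_eq_mul, h2] at *
  simp only [show ((0 : Fin 2) = 1) = False from by decide,
    show ((1 : Fin 2) = 0) = False from by decide, ↓reduceIte]
  field_simp
  ring
end

section
/- For a qubit state of the form ϱ_ω = ½(1 + x cos(ω) σ_x + y sin(ω) σ_y) with constants 0 < |x|, |y| < 1, the quantum Fisher information is F(ϱ_ω) = 1 − 2(1 − x²)(1 − y²) / (2 − x² − y² + (y² − x²) cos(2ω)). -/
open Matrix Complex
set_option maxHeartbeats 1000000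

lemma aux_real (x y s c : ℝ) (h : s^2 = 1 - c^2)
    (hD0 : (1 - x^2*c^2 - y^2*s^2) ≠ 0) :
    (x^2-y^2)^2*s^2*c^2/(1 - x^2*c^2 - y^2*s^2) + x^2*s^2 + y^2*c^2
      = 1 - 2*(1-x^2)*(1-y^2)/(2 - x^2 - y^2 + (y^2-x^2)*(2*c^2-1)) := by
  have h2 : 2 - x^2 - y^2 + (y^2-x^2)*(2*c^2-1) = 2*(1 - x^2*c^2 - y^2*s^2) := by
    rw [h]; ring
  rw [h2, h]
  have hD0' : (1 - x^2*c^2 - y^2*(1-c^2)) ≠ 0 := by rw [h] at hD0; exact hD0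
  field_simp
  ring

/-- QFI of the qubit family `ϱ_ω = ½(1 + x cos ω σ_x + y sin ω σ_y)`:
`F = 1 − 2(1−x²)(1−y²)/(2 − x² − y² + (y² − x²) cos 2ω)`. -/
theorem qfi_qubit_family
    (x y ω : ℝ) (hx0 : 0 < |x|) (hx1 : |x| < 1) (hy0 : 0 < |y|) (hy1 : |y| < 1)
    (σx σy ϱ dϱ L : Matrix (Fin 2) (Fin 2) ℂ)
    (hσx : σx = !![0, 1; 1, 0])
    (hσy : σy = !![0, -Complex.I; Complex.I, 0])
    (hϱ : ϱ = (1/2 : ℂ) • (1 + ((x * Real.cos ω : ℝ) : ℂ) • σx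
        + ((y * Real.sin ω : ℝ) : ℂ) • σy))
    (hdϱ : dϱ = (1/2 : ℂ) • (((-(x * Real.sin ω) : ℝ) : ℂ) • σx
        + ((y * Real.cos ω : ℝ) : ℂ) • σy))
    (hL : L.IsHermitian)
    (hSLD : dϱ = (1/2 : ℂ) • (L * ϱ + ϱ * L)) :
    (ϱ * L ^ 2).trace
      = ((1 - 2 * (1 - x ^ 2) * (1 - y ^ 2)
          / (2 - x ^ 2 - y ^ 2 + (y ^ 2 - x ^ 2) * Real.cos (2 * ω)) : ℝ) : ℂ) := by
  subst hσx hσy hϱ hdϱ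
  have h00 := congrFun (congrFun hSLD 0) 0
  have h01 := congrFun (congrFun hSLD 0) 1
  have h10 := congrFun (congrFun hSLD 1) 0
  have h11 := congrFun (congrFun hSLD 1) 1
  simp [Matrix.mul_apply, Fin.sum_univ_two, Matrix.one_apply] at h00 h01 h10 h11
  set cs : ℂ := Complex.cos ω with hcs
  set sn : ℂ := Complex.sin ω with hsn
  have hpr : L 0 0 = L 1 1 := by linear_combination h00 - h11
  have hq : L 0 1 = (-(x:ℂ)*sn - (y:ℂ)*cs*Complex.I) - L 0 0 * ((x:ℂ)*cs - (y:ℂ)*sn*Complex.I) := by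
    linear_combination -h01 + (((x:ℂ)*cs - (y:ℂ)*sn*Complex.I)/2) * hpr
  have hs : L 1 0 = (-(x:ℂ)*sn + (y:ℂ)*cs*Complex.I) - L 0 0 * ((x:ℂ)*cs + (y:ℂ)*sn*Complex.I) := by
    linear_combination -h10 + (((x:ℂ)*cs + (y:ℂ)*sn*Complex.I)/2) * hpr
  have hp : (1 - (x:ℂ)^2*cs^2 - (y:ℂ)^2*sn^2) * L 0 0 = ((x:ℂ)^2 - (y:ℂ)^2) * sn * cs := by
    linear_combination h00 - (((x:ℂ)*cs + (y:ℂ)*sn*Complex.I)/2)*hq - (((x:ℂ)*cs - (y:ℂ)*sn*Complex.I)/2)*hs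
      + (((y:ℂ)*sn)*((y:ℂ)*cs) - L 0 0 * ((y:ℂ)*sn)^2) * Complex.I_sq
  -- real quantities
  set D : ℝ := 1 - x^2*(Real.cos ω)^2 - y^2*(Real.sin ω)^2 with hD
  have hx2 : x^2 < 1 := by nlinarith [_root_.sq_abs x, abs_nonneg x]
  have hy2 : y^2 < 1 := by nlinarith [_root_.sq_abs y, abs_nonneg y]
  have hD0 : 0 < D := by
    have hsc := Real.sin_sq_add_cos_sq ω
    nlinarith [sq_nonneg (Real.sin ω), sq_nonneg (Real.cos ω),
      mul_pos (by linarith : (0:ℝ) < 1-x^2) (by linarith : (0:ℝ) < 1-y^2),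
      mul_nonneg (mul_nonneg (by linarith : (0:ℝ) ≤ 1-x^2) (sq_nonneg (Real.cos ω))) (sq_nonneg y),
      mul_nonneg (mul_nonneg (by linarith : (0:ℝ) ≤ 1-y^2) (sq_nonneg (Real.sin ω))) (sq_nonneg x)]
  set P : ℝ := (x^2-y^2)*Real.sin ω*Real.cos ω / D with hPdef
  have hDC : ((D:ℝ):ℂ) = 1 - (x:ℂ)^2*cs^2 - (y:ℂ)^2*sn^2 := by
    rw [hD]; push_cast [hcs, hsn]; ring
  have hDne : ((D:ℝ):ℂ) ≠ 0 := Complex.ofReal_ne_zero.mpr hD0.ne'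
  have hP : L 0 0 = ((P:ℝ):ℂ) := by
    have h1 : ((P:ℝ):ℂ) = (((x^2-y^2)*Real.sin ω*Real.cos ω : ℝ) : ℂ) / ((D:ℝ):ℂ) := by
      rw [hPdef]; push_cast; ring
    rw [h1, eq_div_iff hDne, hDC]
    push_cast [hcs, hsn]
    linear_combination hp
  rw [hP] at hq hs
  have hpr' : L 1 1 = ((P:ℝ):ℂ) := hpr ▸ hP
  -- compute the trace
  rw [pow_two]
  conv_lhs => simp [Matrix.trace_fin_two, Matrix.mul_apply, Fin.sum_univ_two, Matrix.one_apply]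
  rw [hP, hq, hs, hpr']
  have key : ((P:ℝ):ℂ)^2 * (1 - (x:ℂ)^2*cs^2 - (y:ℂ)^2*sn^2) + (x:ℂ)^2*sn^2 + (y:ℂ)^2*cs^2
      = (((x^2-y^2)^2*(Real.sin ω)^2*(Real.cos ω)^2/D + x^2*(Real.sin ω)^2 + y^2*(Real.cos ω)^2 : ℝ) : ℂ) := by
    rw [← hDC]
    have hPD : (P:ℝ)^2 * D = (x^2-y^2)^2*(Real.sin ω)^2*(Real.cos ω)^2/D := by
      rw [hPdef]; field_simp
    push_cast [← hPD]
    ring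
  trans (((P:ℝ):ℂ)^2 * (1 - (x:ℂ)^2*cs^2 - (y:ℂ)^2*sn^2) + (x:ℂ)^2*sn^2 + (y:ℂ)^2*cs^2)
  · linear_combination (((P:ℝ):ℂ)^2 * sn^2 * (y:ℂ)^2 - (y:ℂ)^2 * cs^2) * Complex.I_sq
  · rw [key]
    norm_cast
    rw [show Real.cos (2*ω) = 2*(Real.cos ω)^2 - 1 from Real.cos_two_mul ω]
    exact aux_real x y (Real.sin ω) (Real.cos ω) (by nlinarith [Real.sin_sq_add_cos_sq ω]) hD0.ne'
end
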